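/- Let D be a finite set of lattice points in Z_+^3 (a three-dimensional diagram) and let J_D be the kernel of the K-algebra map from K[T_u : u in D] to K[x_i, y_j, z_k] sending T_{(i,j,k)} to x_i y_j z_k. If a binomial f = T_u T_v - T_{u'} T_{v'} with u,v,u',v' in D lies in J_D and is nonzero, then f is obtained from T_u T_v by switching exactly one of the three coordinates between u and v; i.e., writing u=(i1,j1,k1) and v=(i2,j2,k2), the pair {u',v'} equals {(i2,j1,k1),(i1,j2,k2)} or {(i1,j2,k1),(i2,j1,k2)} or {(i1,j1,k2),(i2,j2,k1)}. -/

import Mathlib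

open MvPolynomial

/-- A lattice point of `ℤ₊³`, modeled as a triple of natural numbers. -/
abbrev Pt : Type := ℕ × ℕ × ℕ

/-- The toric map sending `T_{(i,j,k)} ↦ x_i y_j z_k`, where the `x`, `y`, `z`
variables are modeled as the variables `(0,·)`, `(1,·)`, `(2,·)` of a polynomial
ring indexed by `Fin 3 × ℕ`. -/
noncomputable def toricMap (K : Type*) [Field K] :
    MvPolynomial Pt K →ₐ[K] MvPolynomial (Fin 3 × ℕ) K :=
  aeval fun v => X (0, v.1) * X (1, v.2.1) * X (2, v.2.2)

/-- A three-dimensional Ferrers diagram: a finite downward-closed set of points with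
coordinates at least `1`. -/
def IsFerrers (D : Finset Pt) : Prop :=
  ∀ v ∈ D, 1 ≤ v.1 ∧ 1 ≤ v.2.1 ∧ 1 ≤ v.2.2 ∧
    ∀ i j k : ℕ, 1 ≤ i → i ≤ v.1 → 1 ≤ j → j ≤ v.2.1 → 1 ≤ k → k ≤ v.2.2 → (i, j, k) ∈ D

/-- The projection property of a three-dimensional Ferrers diagram. -/
def ProjProp (D : Finset Pt) : Prop :=
  ∀ i j₁ k₁ j₂ k₂ : ℕ, 2 ≤ i → (i, j₁, k₁) ∈ D → (i, j₂, k₂) ∈ D → (i - 1, j₁, k₂) ∈ D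

/-- `{a, b}` is obtained from `{u, v}` by switching exactly one of the three
coordinates. -/
def IsSwitch (u v a b : Pt) : Prop :=
  (a = (v.1, u.2.1, u.2.2) ∧ b = (u.1, v.2.1, v.2.2)) ∨
  (a = (u.1, v.2.1, u.2.2) ∧ b = (v.1, u.2.1, v.2.2)) ∨
  (a = (u.1, u.2.1, v.2.2) ∧ b = (v.1, v.2.1, u.2.2))

/-- The 2-minors ideal `I₂(D)` of a diagram, in the polynomial ring with variables
indexed by all lattice points. -/
noncomputable def I2full (K : Type*) [Field K] (D : Finset Pt) : Ideal (MvPolynomial Pt K) :=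
  Ideal.span {f | ∃ u v a b : Pt, u ∈ D ∧ v ∈ D ∧ a ∈ D ∧ b ∈ D ∧ IsSwitch u v a b ∧
    f = X u * X v - X a * X b}


private lemma pairMultiset {α : Type*} {a b c d : α} (h : ({a, b} : Multiset α) = {c, d}) :
    (a = c ∧ b = d) ∨ (a = d ∧ b = c) := by
  rcases Multiset.cons_eq_cons.1 h with ⟨h1, h2⟩ | ⟨h1, cs, h2, h3⟩
  · exact Or.inl ⟨h1, Multiset.singleton_inj.1 h2⟩
  · rw [Multiset.singleton_eq_cons_iff] at h2 h3
    exact Or.inr ⟨h3.1.symm, h2.1⟩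

private lemma pairX {K : Type*} [Field K] {σ : Type*} {a b c d : σ}
    (h : (X a * X b : MvPolynomial σ K) = X c * X d) : ({a, b} : Multiset σ) = {c, d} := by
  classical
  rw [X, X, X, X, monomial_mul, monomial_mul, one_mul] at h
  have h2 := (monomial_left_injective (one_ne_zero (α := K))) h
  have := congrArg Finsupp.toMultiset h2
  simpa using this

set_option maxHeartbeats 1000000 in
/-- a nonzero quadratic binomial `T_u T_v − T_{u'} T_{v'}` in the toric
ideal of a diagram `D` is obtained from `T_u T_v` by switching exactly one of the
three coordinates between `u` and `v`. -/
theorem stmt0 {K : Type*} [Field K] (D : Finset Pt) (u v u' v' : Pt)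
    (hu : u ∈ D) (hv : v ∈ D) (hu' : u' ∈ D) (hv' : v' ∈ D)
    (hne : (X u * X v - X u' * X v' : MvPolynomial Pt K) ≠ 0)
    (hker : toricMap K (X u * X v - X u' * X v') = 0) :
    ({u', v'} : Multiset Pt) = {(v.1, u.2.1, u.2.2), (u.1, v.2.1, v.2.2)} ∨
    ({u', v'} : Multiset Pt) = {(u.1, v.2.1, u.2.2), (v.1, u.2.1, v.2.2)} ∨
    ({u', v'} : Multiset Pt) = {(u.1, u.2.1, v.2.2), (v.1, v.2.1, u.2.2)} := by
  classical
  obtain ⟨u1, u2, u3⟩ := u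
  obtain ⟨v1, v2, v3⟩ := v
  obtain ⟨a1, a2, a3⟩ := u'
  obtain ⟨b1, b2, b3⟩ := v'
  have heq : toricMap K (X (u1,u2,u3) * X (v1,v2,v3)) =
      toricMap K (X (a1,a2,a3) * X (b1,b2,b3)) := by
    rwa [map_sub, sub_eq_zero] at hker
  have h0 : (X u1 * X v1 : MvPolynomial ℕ K) = X a1 * X b1 := by
    have := congrArg (aeval (R := K)
      fun p : Fin 3 × ℕ => if p.1 = 0 then (X p.2 : MvPolynomial ℕ K) else 1) heq
    simpa [toricMap] using this
  have h1 : (X u2 * X v2 : MvPolynomial ℕ K) = X a2 * X b2 := by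
    have := congrArg (aeval (R := K)
      fun p : Fin 3 × ℕ => if p.1 = 1 then (X p.2 : MvPolynomial ℕ K) else 1) heq
    simpa [toricMap] using this
  have h2 : (X u3 * X v3 : MvPolynomial ℕ K) = X a3 * X b3 := by
    have := congrArg (aeval (R := K)
      fun p : Fin 3 × ℕ => if p.1 = 2 then (X p.2 : MvPolynomial ℕ K) else 1) heq
    simpa [toricMap] using this
  rcases pairMultiset (pairX h0).symm with ⟨e1, e2⟩ | ⟨e1, e2⟩ <;>
    rcases pairMultiset (pairX h1).symm with ⟨e3, e4⟩ | ⟨e3, e4⟩ <;>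
      rcases pairMultiset (pairX h2).symm with ⟨e5, e6⟩ | ⟨e5, e6⟩ <;>
        subst e1 <;> subst e2 <;> subst e3 <;> subst e4 <;> subst e5 <;> subst e6 <;>
          first
            | exact absurd (sub_self _) hne
            | exact absurd (by rw [mul_comm]; exact sub_self _) hne
            | (left; first | rfl | exact Multiset.cons_swap _ _ _)
            | (right; left; first | rfl | exact Multiset.cons_swap _ _ _)
            | (right; right; first | rfl | exact Multiset.cons_swap _ _ _)
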